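/- For all integers k ≥ 20 and d with 0.42·k ≤ d < k/2, one has g(k,d) < 1/2, where g(k,d) := 1 − (1 − (k−d)(k−2d−1)/(k−1)²)·(1 − 1/k)^{k−d}. -/

import Mathlib

lemma exp058_lt : Real.exp 0.58 < 1.7861 := by
  have h : Real.exp 0.58 ^ 50 < 1.7861 ^ 50 := by
    have he : Real.exp 0.58 ^ 50 = Real.exp 1 ^ 29 := by
      rw [← Real.exp_nat_mul, ← Real.exp_nat_mul]; norm_num
    rw [he]
    calc Real.exp 1 ^ 29 < 2.7182818286 ^ 29 :=
          pow_lt_pow_left₀ Real.exp_one_lt_d9 (Real.exp_pos 1).le (by norm_num)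
      _ < 1.7861 ^ 50 := by norm_num
  exact lt_of_pow_lt_pow_left₀ 50 (by norm_num) h

set_option maxHeartbeats 2000000 in
/-- For integers `k ≥ 20` and `0.42k ≤ d < k/2`, one has `g(k,d) < 1/2`, where
`g(k,d) = 1 - (1 - (k-d)(k-2d-1)/(k-1)²)(1 - 1/k)^{k-d}`. -/
theorem stmt_13 (k d : ℕ) (hk : 20 ≤ k) (hd : 0.42 * (k : ℝ) ≤ (d : ℝ)) (hdk : 2 * d < k) :
    1 - (1 - ((k : ℝ) - d) * ((k : ℝ) - 2 * d - 1) / ((k : ℝ) - 1) ^ 2) *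
        (1 - 1 / (k : ℝ)) ^ (k - d) < 1 / 2 := by
  have hk1 : (20:ℝ) ≤ (k:ℝ) := by exact_mod_cast hk
  have hdlt : d < k := by omega
  have h2d : 2*(d:ℝ) + 1 ≤ (k:ℝ) := by
    have : 2*d + 1 ≤ k := hdk
    exact_mod_cast this
  set K := (k:ℝ) with hKdef
  set D := (d:ℝ) with hDdef
  have hK1pos : (0:ℝ) < K - 1 := by linarith
  have hKpos : (0:ℝ) < K := by linarith
  have hncast : ((k - d : ℕ) : ℝ) = K - D := by rw [Nat.cast_sub hdlt.le]
  set n := k - d with hn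
  -- base: exp(-(1/(K-1))) ≤ 1 - 1/K
  have hexp1 : K / (K-1) ≤ Real.exp (1/(K-1)) := by
    have h := Real.add_one_le_exp (1/(K-1))
    have h2 : K/(K-1) = 1/(K-1) + 1 := by field_simp; ring
    linarith
  have hbase : Real.exp (-(1/(K-1))) ≤ 1 - 1/K := by
    rw [Real.exp_neg]
    have hxpos : 0 < K/(K-1) := by positivity
    have h4 := inv_anti₀ hxpos hexp1
    have h3 : (K/(K-1))⁻¹ = 1 - 1/K := by field_simp
    linarith
  have hpow : Real.exp (-((n:ℝ)/(K-1))) ≤ (1 - 1/K)^n := by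
    have h1 : Real.exp (-((n:ℝ)/(K-1))) = (Real.exp (-(1/(K-1))))^n := by
      rw [← Real.exp_nat_mul]; congr 1; ring
    rw [h1]
    exact pow_le_pow_left₀ (Real.exp_pos _).le hbase n
  have hBn : Real.exp (-(0.58*K/(K-1))) ≤ (1 - 1/K)^n := by
    refine le_trans (Real.exp_le_exp.mpr ?_) hpow
    rw [hncast, neg_le_neg_iff]
    have hle : K - D ≤ 0.58*K := by linarith
    gcongr
  -- numerator bound
  have hKD : 0 ≤ K - D := by linarith
  have hK2D : 0 ≤ K - 2*D - 1 := by linarith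
  have hnum : (K-D)*(K-2*D-1) ≤ 0.58*K*(0.16*K-1) := by
    nlinarith [mul_nonneg (by linarith : (0:ℝ) ≤ D - 0.42*K) (by linarith : (0:ℝ) ≤ 0.16*K - 1),
      mul_nonneg hKD (by linarith : (0:ℝ) ≤ 2*D - 0.84*K)]
  set P : ℝ := 1 - 0.58*K*(0.16*K-1)/(K-1)^2 with hPdef
  set A : ℝ := 1 - (K-D)*(K-2*D-1)/(K-1)^2 with hAdef
  have hPA : P ≤ A := by
    apply sub_le_sub_left
    exact (div_le_div_iff_of_pos_right (by positivity)).mpr hnum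
  have hPpos : 0 ≤ P := by
    rw [hPdef, sub_nonneg, div_le_one (by positivity)]
    nlinarith
  -- exp(-0.58) > 0.5598
  have hEneg : (0.5598:ℝ) < Real.exp (-0.58) := by
    have h1 : Real.exp (-0.58) * Real.exp 0.58 = 1 := by
      rw [← Real.exp_add]; norm_num
    nlinarith [exp058_lt, Real.exp_pos (-0.58), Real.exp_pos 0.58]
  have hsplit : Real.exp (-(0.58*K/(K-1))) = Real.exp (-0.58) * Real.exp (-(0.58/(K-1))) := by
    have harg : (-0.58) + (-(0.58/(K-1))) = -(0.58*K/(K-1)) := by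
      field_simp
      ring
    rw [← harg, Real.exp_add]
  have hE2 : 1 - 0.58/(K-1) ≤ Real.exp (-(0.58/(K-1))) := by
    have := Real.add_one_le_exp (-(0.58/(K-1))); linarith
  have hupos : (0:ℝ) ≤ 1 - 0.58/(K-1) := by
    rw [sub_nonneg, div_le_one hK1pos]; linarith
  -- key cubic inequality
  have hQ : (0.8995:ℝ) ≤ P * (1 - 0.58/(K-1)) := by
    have e : P * (1 - 0.58/(K-1))
        = (((K-1)^2 - 0.58*K*(0.16*K-1)) * ((K-1) - 0.58))/(K-1)^3 := by
      rw [hPdef]; field_simp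
      try exact Or.inl trivial
    rw [e, le_div_iff₀ (by positivity)]
    nlinarith [sq_nonneg (K-20), mul_nonneg (by linarith : (0:ℝ) ≤ K - 20) (sq_nonneg (K-20))]
  have hchain : 1/2 < A * (1 - 1/K)^n := by
    calc (1:ℝ)/2 < 0.5598 * (P * (1 - 0.58/(K-1))) := by linarith
      _ = P * (0.5598 * (1 - 0.58/(K-1))) := by ring
      _ ≤ P * (Real.exp (-0.58) * Real.exp (-(0.58/(K-1)))) := by
          apply mul_le_mul_of_nonneg_left _ hPpos
          exact mul_le_mul hEneg.le hE2 hupos (Real.exp_pos _).le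
      _ = P * Real.exp (-(0.58*K/(K-1))) := by rw [← hsplit]
      _ ≤ P * (1 - 1/K)^n := mul_le_mul_of_nonneg_left hBn hPpos
      _ ≤ A * (1 - 1/K)^n := by
          refine mul_le_mul_of_nonneg_right hPA (pow_nonneg ?_ n)
          rw [sub_nonneg, div_le_one hKpos]; linarith
  rw [hAdef] at hchain
  linarith
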